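/- If ν* : S → ℝ is a global minimizer of L, then Z(ν*) = exp(1) (Euler's number) and consequently L(ν*) = 𝓛̃(ν*). -/

import Mathlib

/-- If `ν*` is a global minimizer of `L`, then `Z(ν*) = exp 1` and consequently `L(ν*) = 𝓛̃(ν*)`. -/
theorem stmt_14 {S X : Type*} [Fintype S] [Fintype X] [Nonempty S] [Nonempty X]
    (α γ : ℝ) (hα : 0 < α) (hγ0 : 0 < γ) (hγ1 : γ < 1)
    (c : X → ℝ) (hc : ∀ x, 0 ≤ c x) (hc0 : ∃ x₀, 0 < c x₀)
    (st st' : X → S) (e₀ : X → ℝ)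
    (p₀ : S → ℝ) (hp₀ : ∀ s, 0 ≤ p₀ s) (hp₀sum : ∑ s, p₀ s = 1)
    (ehat : (S → ℝ) → X → ℝ)
    (hehat : ∀ (ν : S → ℝ) (x : X), ehat ν x = e₀ x + γ * ν (st' x) - ν (st x))
    (Z : (S → ℝ) → ℝ)
    (hZ : ∀ ν : S → ℝ, Z ν = ∑ x, c x * Real.exp (ehat ν x / α))
    (L : (S → ℝ) → ℝ)
    (hL : ∀ ν : S → ℝ,
      L ν = (1 - γ) * ∑ s, p₀ s * ν s + α * ∑ x, c x * Real.exp (ehat ν x / α - 1))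
    (Ltil : (S → ℝ) → ℝ)
    (hLtil : ∀ ν : S → ℝ,
      Ltil ν = (1 - γ) * ∑ s, p₀ s * ν s + α * Real.log (Z ν))
    (νstar : S → ℝ) (hνstar : ∀ ν : S → ℝ, L νstar ≤ L ν) :
    Z νstar = Real.exp 1 ∧ L νstar = Ltil νstar := by
  have hβ : (0:ℝ) < 1 - γ := by linarith
  set E := ∑ x, c x * Real.exp (ehat νstar x / α - 1) with hE
  have hEpos : 0 < E := by
    apply Finset.sum_pos'
    · intro i _; exact mul_nonneg (hc i) (Real.exp_pos _).le
    · obtain ⟨x₀, hx₀⟩ := hc0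
      exact ⟨x₀, Finset.mem_univ _, mul_pos hx₀ (Real.exp_pos _)⟩
  have hZE : Z νstar = E * Real.exp 1 := by
    rw [hZ, hE, Finset.sum_mul]
    refine Finset.sum_congr rfl fun x _ => ?_
    rw [mul_assoc, ← Real.exp_add]
    ring_nf
  have key : ∀ t : ℝ, 0 < t → Real.log t ≤ E * (t - 1) := by
    intro t ht
    set C := -α * Real.log t / (1 - γ) with hC
    have hCt : (γ - 1) * C / α = Real.log t := by
      rw [hC]; field_simp; ring
    have h1 := hνstar (fun s => νstar s + C)
    have hLC : L (fun s => νstar s + C) =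
        (1 - γ) * ∑ s, p₀ s * νstar s + (1 - γ) * C + α * (E * t) := by
      rw [hL]
      have hsum1 : ∑ s, p₀ s * (νstar s + C) = (∑ s, p₀ s * νstar s) + C := by
        have h : ∑ s, p₀ s * (νstar s + C)
            = (∑ s, p₀ s * νstar s) + (∑ s, p₀ s) * C := by
          rw [Finset.sum_mul, ← Finset.sum_add_distrib]
          exact Finset.sum_congr rfl fun s _ => by ring
        rw [h, hp₀sum, one_mul]
      have hsum2 : ∑ x, c x * Real.exp (ehat (fun s => νstar s + C) x / α - 1)
          = E * t := by
        rw [hE, Finset.sum_mul]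
        refine Finset.sum_congr rfl fun x _ => ?_
        have he : ehat (fun s => νstar s + C) x = ehat νstar x + (γ - 1) * C := by
          rw [hehat, hehat]; ring
        rw [he, mul_assoc, ← Real.exp_log ht, ← hCt, ← Real.exp_add]
        congr 2
        field_simp
        ring
      rw [hsum1, hsum2]; ring
    rw [hLC, hL νstar, ← hE] at h1
    have h2 : (1 - γ) * C = -α * Real.log t := by
      rw [hC]; field_simp
    rw [h2] at h1
    have : α * Real.log t ≤ α * (E * (t - 1)) := by nlinarith
    exact le_of_mul_le_mul_left this hα
  have hElog : Real.log E = E - 1 := by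
    have h1 := key (1 / E) (by positivity)
    rw [Real.log_div one_ne_zero (ne_of_gt hEpos), Real.log_one] at h1
    have h2 : E * (1 / E - 1) = 1 - E := by field_simp
    rw [h2] at h1
    have h3 := Real.log_le_sub_one_of_pos hEpos
    linarith
  have hE1 : E = 1 := by
    by_contra h
    have hne : E - 1 ≠ 0 := sub_ne_zero.mpr h
    have := Real.add_one_lt_exp hne
    rw [← hElog, Real.exp_log hEpos] at this
    linarith
  constructor
  · rw [hZE, hE1, one_mul]
  · rw [hL νstar, hLtil νstar, ← hE, hE1, hZE, hE1, one_mul,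
      Real.log_exp]
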